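/- For every real x > 0, every real κ₁₂ > 0, every real κ₁₃ ≥ 0, and every m ∈ ℕ, the double sequence (n₁, n₂) ↦ x^{n₁ + κ₁₂·n₂ + κ₁₃·m} / Γ(1 + κ₁₂·n₂ + κ₁₃·m + n₁) is summable over ℕ × ℕ, where the power with real exponent is the real power of x. (This is the convergence of the normalization series of the (γ₁, 1)-deformed vector coherent state in which the second Gamma factor is an ordinary factorial.) -/

import Mathlib

open Real

/-- `Γ(1+a) * n! ≤ Γ(1+a+n)` for `a ≥ 0`. -/
lemma gamma_mul_factorial_le (a : ℝ) (ha : 0 ≤ a) :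
    ∀ n : ℕ, Real.Gamma (1 + a) * n.factorial ≤ Real.Gamma (1 + a + n) := by
  intro n
  induction n with
  | zero => simp
  | succ n ih =>
    have hpos : (0:ℝ) < 1 + a + n := by positivity
    have h1 : Real.Gamma ((1 + a + n) + 1) = (1 + a + n) * Real.Gamma (1 + a + n) :=
      Real.Gamma_add_one (ne_of_gt hpos)
    have h2 : (1:ℝ) + a + ((n:ℕ)+1 : ℕ) = (1 + a + n) + 1 := by push_cast; ring
    rw [h2, h1]
    have hfn : ((n+1 : ℕ) : ℝ) * ((n : ℕ).factorial : ℝ) = ((n+1 : ℕ).factorial : ℝ) := by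
      push_cast [Nat.factorial_succ]; ring
    calc Real.Gamma (1 + a) * ((n+1 : ℕ).factorial : ℝ)
        = ((n:ℝ) + 1) * (Real.Gamma (1 + a) * (n : ℕ).factorial) := by
          rw [← hfn]; push_cast; ring
      _ ≤ (1 + a + n) * Real.Gamma (1 + a + n) := by
          apply mul_le_mul
          · linarith
          · exact ih
          · positivity
          · positivity

/-- Summability of the single series `x^(κn+c)/Γ(1+(κn+c))`. -/
lemma single_summable (x κ c : ℝ) (hx : 0 < x) (hκ : 0 < κ) (hc : 0 ≤ c) :
    Summable fun n : ℕ => x ^ (κ * n + c) / Real.Gamma (1 + (κ * n + c)) := by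
  set M : ℕ := ⌈x⌉₊ + 1 with hM
  have hxM : x < (M : ℝ) := by
    have := Nat.le_ceil x
    have : x ≤ (⌈x⌉₊ : ℝ) := this
    push_cast [hM]; linarith
  have hM1 : (1:ℝ) < M := by
    have h0 : 0 < ⌈x⌉₊ := Nat.ceil_pos.2 hx
    have : (1:ℕ) < M := by omega
    exact_mod_cast this
  set s : ℝ := x / M with hs
  have hs0 : 0 < s := div_pos hx (by linarith)
  have hs1 : s < 1 := (div_lt_one (by linarith)).2 hxM
  set r : ℝ := s ^ κ with hr
  have hr0 : 0 ≤ r := Real.rpow_nonneg hs0.le κ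
  have hr1 : r < 1 := Real.rpow_lt_one hs0.le hs1 hκ
  have hsum : Summable fun n : ℕ => ((M:ℝ) ^ (M:ℝ) * s ^ c) * r ^ n :=
    (summable_geometric_of_lt_one hr0 hr1).mul_left _
  apply Summable.of_norm_bounded_eventually_nat hsum
  -- eventually the bound holds
  have hlarge : ∀ᶠ n : ℕ in Filter.atTop, (M : ℝ) ≤ κ * n + c := by
    have : Filter.Tendsto (fun n : ℕ => κ * n + c) Filter.atTop Filter.atTop := by
      apply Filter.tendsto_atTop_add_const_right
      exact Filter.Tendsto.const_mul_atTop hκ tendsto_natCast_atTop_atTop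
    exact this.eventually_ge_atTop _
  filter_upwards [hlarge] with n hn
  set b : ℝ := κ * n + c with hb
  have hb1 : (1:ℝ) ≤ b := le_trans hM1.le hn
  have hb0 : 0 < b := by linarith
  set k : ℕ := ⌊b⌋₊ with hk
  have hkb : (k : ℝ) ≤ b := Nat.floor_le hb0.le
  have hbk : b < k + 1 := Nat.lt_floor_add_one b
  have hMk : M ≤ k := Nat.le_floor hn
  -- Γ(1+b) ≥ k!
  have hgamma_ge : (k.factorial : ℝ) ≤ Real.Gamma (1 + b) := by
    have h2k : (2:ℝ) ≤ (k:ℝ) + 1 := by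
      have : 1 ≤ k := le_trans (by omega) hMk
      exact_mod_cast Nat.succ_le_succ this
    have hmono := Real.Gamma_strictMonoOn_Ici.monotoneOn
    have h1 : Real.Gamma ((k:ℝ) + 1) ≤ Real.Gamma (1 + b) := by
      apply hmono
      · exact h2k
      · simp only [Set.mem_Ici]; linarith
      · linarith
    rwa [Real.Gamma_nat_eq_factorial] at h1
  -- k! ≥ M^(b-M)  (as rpow)
  have hfact_ge : (M:ℝ) ^ (b - (M:ℝ)) ≤ (k.factorial : ℝ) := by
    have hNk : ⌈x⌉₊ ≤ k := by omega
    have h1 : (⌈x⌉₊.factorial) * M ^ (k - ⌈x⌉₊) ≤ k.factorial := by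
      have h := @Nat.factorial_mul_pow_le_factorial ⌈x⌉₊ (k - ⌈x⌉₊)
      rw [Nat.add_sub_cancel' hNk] at h
      exact h
    have h2 : (M:ℝ) ^ (k - ⌈x⌉₊ : ℕ) ≤ (k.factorial : ℝ) := by
      have hf1 : (1:ℝ) ≤ (⌈x⌉₊.factorial : ℝ) := by
        exact_mod_cast Nat.one_le_iff_ne_zero.2 (Nat.factorial_ne_zero _)
      have h1' : (⌈x⌉₊.factorial : ℝ) * (M:ℝ) ^ (k - ⌈x⌉₊ : ℕ) ≤ (k.factorial : ℝ) := by
        exact_mod_cast h1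
      nlinarith [pow_nonneg (by positivity : (0:ℝ) ≤ (M:ℝ)) (k - ⌈x⌉₊)]
    refine le_trans ?_ h2
    rw [← Real.rpow_natCast (M:ℝ) (k - ⌈x⌉₊)]
    apply Real.rpow_le_rpow_of_exponent_le hM1.le
    rw [Nat.cast_sub hNk]
    have hMN : (M:ℝ) = (⌈x⌉₊:ℝ) + 1 := by rw [hM]; push_cast; ring
    linarith [hbk]
  have hgamma_pos : 0 < Real.Gamma (1 + b) := Real.Gamma_pos_of_pos (by linarith)
  have hMpos : (0:ℝ) < M := by linarith
  have hMb : (0:ℝ) < (M:ℝ) ^ (b - (M:ℝ)) := Real.rpow_pos_of_pos hMpos _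
  have key : x ^ b / Real.Gamma (1 + b) ≤ ((M:ℝ) ^ (M:ℝ) * s ^ c) * r ^ n := by
    have h1 : x ^ b / Real.Gamma (1 + b) ≤ x ^ b / (M:ℝ) ^ (b - (M:ℝ)) := by
      apply div_le_div_of_nonneg_left (Real.rpow_nonneg hx.le b) hMb
      exact le_trans hfact_ge hgamma_ge
    refine h1.trans (le_of_eq ?_)
    have hsb : s ^ b = x ^ b / (M:ℝ) ^ b := by
      rw [hs]; exact Real.div_rpow hx.le hMpos.le b
    have hrb : r ^ n = s ^ (κ * n) := by
      rw [hr, ← Real.rpow_natCast (s ^ κ) n, ← Real.rpow_mul hs0.le]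
    have hsplit : s ^ b = s ^ (κ * n) * s ^ c := by
      rw [hb, Real.rpow_add hs0]
    calc x ^ b / (M:ℝ) ^ (b - (M:ℝ))
        = x ^ b / ((M:ℝ) ^ b / (M:ℝ) ^ (M:ℝ)) := by rw [Real.rpow_sub hMpos]
      _ = (M:ℝ) ^ (M:ℝ) * (x ^ b / (M:ℝ) ^ b) := by
          rw [div_div_eq_mul_div]; ring
      _ = (M:ℝ) ^ (M:ℝ) * s ^ b := by rw [hsb]
      _ = ((M:ℝ) ^ (M:ℝ) * s ^ c) * r ^ n := by rw [hsplit, hrb]; ring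
  have hnorm : ‖x ^ b / Real.Gamma (1 + b)‖ = x ^ b / Real.Gamma (1 + b) := by
    rw [Real.norm_eq_abs, abs_of_nonneg]
    positivity
  rw [hnorm]
  exact key

/-- Convergence of the normalization series of the `(γ₁, 1)`-deformed vector coherent
state in which the second Gamma factor is an ordinary factorial. -/
theorem norm_series_summable_gamma1_one (x κ₁₂ κ₁₃ : ℝ)
    (hx : 0 < x) (h12 : 0 < κ₁₂) (h13 : 0 ≤ κ₁₃) (m : ℕ) :
    Summable fun p : ℕ × ℕ =>
      x ^ ((p.1 : ℝ) + κ₁₂ * p.2 + κ₁₃ * m) /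
        Real.Gamma (1 + κ₁₂ * p.2 + κ₁₃ * m + p.1) := by
  set c : ℝ := κ₁₃ * m with hc
  have hc0 : 0 ≤ c := by positivity
  have hF : Summable fun n : ℕ => x ^ n / (n.factorial : ℝ) :=
    Real.summable_pow_div_factorial x
  have hG : Summable fun n : ℕ => x ^ (κ₁₂ * n + c) / Real.Gamma (1 + (κ₁₂ * n + c)) :=
    single_summable x κ₁₂ c hx h12 hc0
  have hprod : Summable fun p : ℕ × ℕ =>
      (x ^ p.1 / (p.1.factorial : ℝ)) *
        (x ^ (κ₁₂ * p.2 + c) / Real.Gamma (1 + (κ₁₂ * p.2 + c))) := by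
    apply hF.mul_of_nonneg hG
    · intro n; positivity
    · intro n
      have : 0 < Real.Gamma (1 + (κ₁₂ * n + c)) :=
        Real.Gamma_pos_of_pos (by positivity)
      positivity
  apply Summable.of_nonneg_of_le _ _ hprod
  · intro p
    have : 0 < Real.Gamma (1 + κ₁₂ * p.2 + c + p.1) :=
      Real.Gamma_pos_of_pos (by positivity)
    positivity
  · intro p
    set a : ℝ := κ₁₂ * p.2 + c with ha
    have ha0 : 0 ≤ a := by positivity
    have hgA := gamma_mul_factorial_le a ha0 p.1
    have hG1 : 0 < Real.Gamma (1 + a) := Real.Gamma_pos_of_pos (by positivity)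
    have hG2 : 0 < Real.Gamma (1 + a + p.1) := Real.Gamma_pos_of_pos (by positivity)
    have hxsplit : x ^ ((p.1 : ℝ) + κ₁₂ * p.2 + c) = x ^ (p.1 : ℕ) * x ^ a := by
      rw [show (p.1 : ℝ) + κ₁₂ * p.2 + c = (p.1 : ℝ) + a by rw [ha]; ring,
        Real.rpow_add hx, Real.rpow_natCast]
    have harg : 1 + κ₁₂ * p.2 + c + p.1 = 1 + a + p.1 := by rw [ha]; ring
    rw [hxsplit, harg, div_mul_div_comm]
    refine div_le_div_of_nonneg_left (by positivity) (by positivity) ?_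
    rw [mul_comm]
    exact hgA
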